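/- Let θ := arccos(−(x_max+x_min)/(x_max−x_min)) ∈ (0,π) (well defined since x_min < 0 < x_max). Then: (a) 0 < θ < β; (b) x̃(θ) = 0 and ỹ(θ) = 0, i.e. the parametrization of the ellipse passes through the origin at parameter θ; (c) sin(θ)·(μ₁√σ₂₂ + μ₂√σ₁₁·cos β) = cos(θ)·μ₂√σ₁₁·sin β, i.e. tan θ = sin β / ((μ₁/μ₂)·√(σ₂₂/σ₁₁) + cos β). -/

import Mathlib

set_option maxHeartbeats 800000

open Real

theorem stmt10
    (σ11 σ12 σ22 μ1 μ2 : ℝ)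
    (hσ11 : 0 < σ11) (hσ22 : 0 < σ22)
    (hdet : 0 < σ11 * σ22 - σ12 ^ 2)
    (hμ1 : 0 < μ1) (hμ2 : 0 < μ2)
    (detS D1 D2 xmin xmax ymin ymax β : ℝ)
    (hdetS : detS = σ11 * σ22 - σ12 ^ 2)
    (hD1 : D1 = (μ2 * σ12 - μ1 * σ22) ^ 2 + μ2 ^ 2 * detS)
    (hxmin : xmin = (μ2 * σ12 - μ1 * σ22 - Real.sqrt D1) / detS)
    (hxmax : xmax = (μ2 * σ12 - μ1 * σ22 + Real.sqrt D1) / detS)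
    (hD2 : D2 = (μ1 * σ12 - μ2 * σ11) ^ 2 + μ1 ^ 2 * detS)
    (hymin : ymin = (μ1 * σ12 - μ2 * σ11 - Real.sqrt D2) / detS)
    (hymax : ymax = (μ1 * σ12 - μ2 * σ11 + Real.sqrt D2) / detS)
    (hβ : β = Real.arccos (-σ12 / Real.sqrt (σ11 * σ22)))
    (xt yt : ℝ → ℝ)
    (hxt : ∀ t, xt t = (xmax + xmin) / 2 + ((xmax - xmin) / 2) * Real.cos t)
    (hyt : ∀ t, yt t = (ymax + ymin) / 2 + ((ymax - ymin) / 2) * Real.cos (t - β))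
    (θ : ℝ) (hθ : θ = Real.arccos (-(xmax + xmin) / (xmax - xmin))) :
    (0 < θ ∧ θ < β) ∧
    (xt θ = 0 ∧ yt θ = 0) ∧
    Real.sin θ * (μ1 * Real.sqrt σ22 + μ2 * Real.sqrt σ11 * Real.cos β) =
      Real.cos θ * (μ2 * Real.sqrt σ11 * Real.sin β) := by
  have hdS : 0 < detS := by rw [hdetS]; exact hdet
  set A := μ2 * σ12 - μ1 * σ22 with hA
  set B := μ1 * σ12 - μ2 * σ11 with hB
  set r1 := Real.sqrt D1 with hr1def
  set r2 := Real.sqrt D2 with hr2def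
  set d := Real.sqrt detS with hddef
  set s := Real.sqrt (σ11 * σ22) with hsdef
  have hD1pos : 0 < D1 := by
    rw [hD1]
    exact add_pos_of_nonneg_of_pos (sq_nonneg _) (mul_pos (pow_pos hμ2 2) hdS)
  have hD2pos : 0 < D2 := by
    rw [hD2]
    exact add_pos_of_nonneg_of_pos (sq_nonneg _) (mul_pos (pow_pos hμ1 2) hdS)
  have hr1sq : r1 ^ 2 = D1 := Real.sq_sqrt hD1pos.le
  have hr2sq : r2 ^ 2 = D2 := Real.sq_sqrt hD2pos.le
  have hdsq : d ^ 2 = detS := Real.sq_sqrt hdS.le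
  have hσσ : 0 < σ11 * σ22 := mul_pos hσ11 hσ22
  have hssq : s ^ 2 = σ11 * σ22 := Real.sq_sqrt hσσ.le
  have hr1pos : 0 < r1 := Real.sqrt_pos.2 hD1pos
  have hr2pos : 0 < r2 := Real.sqrt_pos.2 hD2pos
  have hdpos : 0 < d := Real.sqrt_pos.2 hdS
  have hspos : 0 < s := Real.sqrt_pos.2 hσσ
  have hA2 : A ^ 2 < r1 ^ 2 := by
    rw [hr1sq, hD1]
    exact lt_add_of_pos_right _ (mul_pos (pow_pos hμ2 2) hdS)
  obtain ⟨hAgt, hAlt⟩ := abs_lt_of_sq_lt_sq' hA2 hr1pos.le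
  have hσ122 : σ12 ^ 2 < s ^ 2 := by rw [hssq]; linarith
  obtain ⟨hσ12gt, hσ12lt⟩ := abs_lt_of_sq_lt_sq' hσ122 hspos.le
  have hr1ne : r1 ≠ 0 := hr1pos.ne'
  have hsne : s ≠ 0 := hspos.ne'
  have hdSne : detS ≠ 0 := hdS.ne'
  have harg : -(xmax + xmin) / (xmax - xmin) = -A / r1 := by
    rw [hxmax, hxmin]
    rw [show (A + r1) / detS + (A - r1) / detS = 2 * A / detS by ring,
      show (A + r1) / detS - (A - r1) / detS = 2 * r1 / detS by ring]
    field_simp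
  have hcosθ : Real.cos θ = -A / r1 := by
    rw [hθ, harg, Real.cos_arccos]
    · rw [le_div_iff₀ hr1pos]; linarith
    · rw [div_le_one hr1pos]; linarith
  have hsinθ : Real.sin θ = μ2 * d / r1 := by
    rw [hθ, harg, Real.sin_arccos]
    rw [show 1 - (-A / r1) ^ 2 = (μ2 * d / r1) ^ 2 by
      field_simp
      linear_combination hr1sq + hD1 - μ2 ^ 2 * hdsq]
    exact Real.sqrt_sq (by positivity)
  have hcosβ : Real.cos β = -σ12 / s := by
    rw [hβ, Real.cos_arccos]
    · rw [le_div_iff₀ hspos]; linarith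
    · rw [div_le_one hspos]; linarith
  have hsinβ : Real.sin β = d / s := by
    rw [hβ, Real.sin_arccos]
    rw [show 1 - (-σ12 / s) ^ 2 = (d / s) ^ 2 by
      field_simp
      linear_combination hssq - hdsq - hdetS]
    exact Real.sqrt_sq (by positivity)
  have hθpos : 0 < θ := by
    rw [hθ, harg]
    exact Real.arccos_pos.2 (by rw [div_lt_one hr1pos]; linarith)
  have hθlepi : θ ≤ π := by rw [hθ]; exact Real.arccos_le_pi _
  have hθltpi : θ < π := by
    rcases lt_or_eq_of_le hθlepi with h | h
    · exact h
    · exfalso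
      have hc : Real.cos θ = -1 := by rw [h, Real.cos_pi]
      rw [hcosθ] at hc
      have : -A = -1 * r1 := by rw [← hc]; field_simp
      linarith
  have hβpos : 0 < β := by
    rw [hβ]
    exact Real.arccos_pos.2 (by rw [div_lt_one hspos]; linarith)
  have hθltβ : θ < β := by
    by_contra h
    push_neg at h
    have h2 : 0 ≤ Real.sin (θ - β) :=
      Real.sin_nonneg_of_nonneg_of_le_pi (by linarith) (by linarith)
    have h1 : Real.sin (θ - β) = -(d * μ1 * σ22) / (r1 * s) := by
      rw [Real.sin_sub, hsinθ, hcosθ, hcosβ, hsinβ, hA]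
      field_simp
      ring
    have h3 : -(d * μ1 * σ22) / (r1 * s) < 0 :=
      div_neg_of_neg_of_pos
        (neg_lt_zero.2 (mul_pos (mul_pos hdpos hμ1) hσ22))
        (mul_pos hr1pos hspos)
    linarith
  have hkey : r1 * s = σ22 * r2 := by
    have hm : D1 * (σ11 * σ22) = σ22 ^ 2 * D2 := by
      rw [hD1, hD2, hdetS, hA, hB]; ring
    rw [hr1def, hsdef, ← Real.sqrt_mul hD1pos.le, hm, hr2def,
      Real.sqrt_mul (sq_nonneg σ22), Real.sqrt_sq hσ22.le]
  refine ⟨⟨hθpos, hθltβ⟩, ⟨?_, ?_⟩, ?_⟩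
  · rw [hxt θ, hcosθ, hxmax, hxmin]
    field_simp
    ring
  · have hd2 : d ^ 2 = σ11 * σ22 - σ12 ^ 2 := by rw [hdsq, hdetS]
    have hcts : Real.cos (θ - β) = -(σ22 * B) / (r1 * s) := by
      rw [Real.cos_sub, hcosθ, hsinθ, hcosβ, hsinβ, hA, hB]
      field_simp
      linear_combination μ2 * hd2
    rw [hyt θ, hcts, hymax, hymin]
    field_simp
    linear_combination (2 * B) * hkey
  · rw [hsinθ, hcosθ, hcosβ, hsinβ]
    have hs12 : s = Real.sqrt σ11 * Real.sqrt σ22 := Real.sqrt_mul hσ11.le σ22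
    have h22 : Real.sqrt σ22 ^ 2 = σ22 := Real.sq_sqrt hσ22.le
    have h1 : Real.sqrt σ11 ≠ 0 := by positivity
    have h2 : Real.sqrt σ22 ≠ 0 := by positivity
    rw [hA, hs12]
    field_simp
    linear_combination μ1 * h22
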